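/- If n = 2^k for some k ≥ 0 and r is a positive integer, then 2^{n−1} divides A^r_n. -/

import Mathlib

/-- The descent set of a permutation `π` of `{1,…,n}` (realized as `Equiv.Perm (Fin n)`),
as a subset of `[n-1] = {1,…,n-1}`: those positions `i` with `π_i > π_{i+1}`. -/
def descSet (n : ℕ) (π : Equiv.Perm (Fin n)) : Finset ℕ :=
  (Finset.Icc 1 (n - 1)).filter fun i =>
    ∀ (h1 : i - 1 < n) (h2 : i < n), π ⟨i, h2⟩ < π ⟨i - 1, h1⟩

/-- The descent set statistic `β_n(S)`: the number of permutations of `{1,…,n}`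
with descent set exactly `S`. -/
def descStat (n : ℕ) (S : Finset ℕ) : ℕ :=
  (Finset.univ.filter fun π : Equiv.Perm (Fin n) => descSet n π = S).card

/-- `A^r_n = Σ_{S ⊆ [n-1]} β_n(S)^r`. -/
def powSumDes (r n : ℕ) : ℕ :=
  ∑ S ∈ (Finset.Icc 1 (n - 1)).powerset, descStat n S ^ r

/-! ### Auxiliary development -/

open Finset

/-- Number of permutations with descent set contained in `T`. -/
def aCount (n : ℕ) (T : Finset ℕ) : ℕ :=
  (Finset.univ.filter fun π : Equiv.Perm (Fin n) => descSet n π ⊆ T).card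

lemma mem_descSet_iff {n : ℕ} {π : Equiv.Perm (Fin n)} {i : ℕ}
    (h1 : i - 1 < n) (h2 : i < n) (hi1 : 1 ≤ i) (hin : i ≤ n - 1) :
    i ∈ descSet n π ↔ π ⟨i, h2⟩ < π ⟨i - 1, h1⟩ := by
  rw [descSet, Finset.mem_filter, Finset.mem_Icc]
  constructor
  · rintro ⟨-, h⟩; exact h h1 h2
  · intro h; exact ⟨⟨hi1, hin⟩, fun _ _ => h⟩

lemma sumPow {X : Type*} [DecidableEq X] (W : Finset X) (x : ℤ) :
    ∑ V ∈ W.powerset, x ^ V.card = (1 + x) ^ W.card := by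
  induction W using Finset.induction_on with
  | empty => simp
  | insert _ _ ha ih =>
    rename_i a s
    rw [Finset.sum_powerset_insert ha, ih, Finset.card_insert_of_notMem ha]
    have : ∑ t ∈ s.powerset, x ^ (insert a t).card = x * ∑ t ∈ s.powerset, x ^ t.card := by
      rw [Finset.mul_sum]
      refine Finset.sum_congr rfl fun t ht => ?_
      have hat : a ∉ t := fun h => ha (Finset.mem_powerset.mp ht h)
      rw [Finset.card_insert_of_notMem hat, pow_succ]
      ring
    rw [this, ih]
    ring

lemma sum_over_interval {X : Type*} [DecidableEq X] {U W : Finset X} (hUW : U ⊆ W) (f : ℕ → ℤ) :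
    ∑ S ∈ W.powerset.filter (fun S => U ⊆ S), f S.card
      = ∑ V ∈ (W \ U).powerset, f (U.card + V.card) := by
  refine Finset.sum_nbij' (fun S => S \ U) (fun V => U ∪ V) ?_ ?_ ?_ ?_ ?_
  · intro S hS
    rw [Finset.mem_filter, Finset.mem_powerset] at hS
    exact Finset.mem_powerset.mpr (Finset.sdiff_subset_sdiff hS.1 Finset.Subset.rfl)
  · intro V hV
    rw [Finset.mem_powerset] at hV
    rw [Finset.mem_filter, Finset.mem_powerset]
    exact ⟨Finset.union_subset hUW (hV.trans (Finset.sdiff_subset)), Finset.subset_union_left⟩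
  · intro S hS
    rw [Finset.mem_filter] at hS
    exact Finset.union_sdiff_of_subset hS.2
  · intro V hV
    rw [Finset.mem_powerset] at hV
    exact Finset.union_sdiff_cancel_left
      (Finset.disjoint_of_subset_right hV (Finset.sdiff_disjoint).symm)
  · intro S hS
    rw [Finset.mem_filter, Finset.mem_powerset] at hS
    congr 1
    rw [Finset.card_sdiff_of_subset hS.2]
    have := Finset.card_le_card hS.2
    omega

lemma sum_pow_over_interval {X : Type*} [DecidableEq X] {U W : Finset X} (hUW : U ⊆ W) (x : ℤ) :
    ∑ S ∈ W.powerset.filter (fun S => U ⊆ S), x ^ S.card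
      = x ^ U.card * (1 + x) ^ (W \ U).card := by
  rw [sum_over_interval hUW, ← sumPow, Finset.mul_sum]
  exact Finset.sum_congr rfl fun V _ => pow_add x _ _

lemma neg_one_pow_sub {a b : ℕ} (h : b ≤ a) : (-1 : ℤ) ^ (a - b) = (-1) ^ a * (-1) ^ b := by
  have h2 : (-1 : ℤ) ^ a = (-1) ^ (a - b) * (-1) ^ b := by
    rw [← pow_add, Nat.sub_add_cancel h]
  rw [h2, mul_assoc, ← pow_add, ← two_mul, pow_mul]
  norm_num

lemma aCount_eq_sum (n : ℕ) (T : Finset ℕ) :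
    aCount n T = ∑ S ∈ T.powerset, descStat n S := by
  rw [aCount, Finset.card_eq_sum_card_fiberwise
    (f := fun π => descSet n π) (t := T.powerset)
    (fun π hπ => Finset.mem_powerset.mpr (Finset.mem_filter.mp hπ).2)]
  refine Finset.sum_congr rfl fun S hS => ?_
  rw [descStat]
  congr 1
  ext π
  simp only [Finset.filter_filter, Finset.mem_filter, Finset.mem_univ, true_and]
  constructor
  · rintro ⟨-, h⟩; exact h
  · intro h; exact ⟨h ▸ Finset.mem_powerset.mp hS, h⟩

lemma descStat_eq_alt (n : ℕ) (S : Finset ℕ) :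
    (descStat n S : ℤ) =
      ∑ T ∈ S.powerset, (-1) ^ (S.card - T.card) * (aCount n T : ℤ) := by
  have expand : ∀ T ∈ S.powerset, (-1 : ℤ) ^ (S.card - T.card) * (aCount n T : ℤ)
      = ∑ U ∈ T.powerset, (-1 : ℤ) ^ (S.card - T.card) * (descStat n U : ℤ) := by
    intro T _
    rw [← Finset.mul_sum, aCount_eq_sum]
    push_cast
    ring
  rw [Finset.sum_congr rfl expand]
  rw [Finset.sum_comm' (s := S.powerset) (t := fun T => T.powerset)
    (t' := S.powerset) (s' := fun U => S.powerset.filter (fun T => U ⊆ T))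
    (by
      intro T U
      simp only [Finset.mem_powerset, Finset.mem_filter]
      constructor
      · rintro ⟨h1, h2⟩; exact ⟨⟨h1, h2⟩, h2.trans h1⟩
      · rintro ⟨⟨h1, h2⟩, -⟩; exact ⟨h1, h2⟩)]
  have inner : ∀ U ∈ S.powerset,
      ∑ T ∈ S.powerset.filter (fun T => U ⊆ T), (-1 : ℤ) ^ (S.card - T.card) * (descStat n U : ℤ)
      = if U = S then (descStat n S : ℤ) else 0 := by
    intro U hU
    have hUS := Finset.mem_powerset.mp hU
    have e1 : ∀ T ∈ S.powerset.filter (fun T => U ⊆ T),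
        (-1 : ℤ) ^ (S.card - T.card) * (descStat n U : ℤ)
        = ((-1 : ℤ) ^ S.card * (descStat n U : ℤ)) * (-1 : ℤ) ^ T.card := by
      intro T hT
      rw [Finset.mem_filter, Finset.mem_powerset] at hT
      rw [neg_one_pow_sub (Finset.card_le_card hT.1)]
      ring
    rw [Finset.sum_congr rfl e1, ← Finset.mul_sum, sum_pow_over_interval hUS]
    by_cases hc : U = S
    · subst hc
      rw [Finset.sdiff_self, if_pos rfl]
      simp only [Finset.card_empty, pow_zero, mul_one]
      have hsq : ((-1 : ℤ)) ^ U.card * ((-1 : ℤ)) ^ U.card = 1 := by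
        rw [← pow_add, ← two_mul, pow_mul]; norm_num
      linear_combination (descStat n U : ℤ) * hsq
    · rw [if_neg hc]
      have hne : (S \ U).card ≠ 0 := by
        rw [Finset.card_ne_zero, Finset.sdiff_nonempty]
        intro hSU
        exact hc (Finset.Subset.antisymm hUS hSU)
      rw [show (1 : ℤ) + (-1) = 0 by ring, zero_pow hne]
      ring
  rw [Finset.sum_congr rfl inner, Finset.sum_ite_eq' S.powerset S (fun _ => (descStat n S : ℤ)),
    if_pos (Finset.mem_powerset_self S)]

lemma powSum_eq (r n : ℕ) :
    (powSumDes r n : ℤ) =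
      ∑ g ∈ Fintype.piFinset (fun _ : Fin r => (Finset.Icc 1 (n-1)).powerset),
        (∏ i : Fin r, ((-1 : ℤ) ^ (g i).card * (aCount n (g i) : ℤ))) *
          (((-1 : ℤ) ^ r) ^ (Finset.univ.biUnion g).card *
            (1 + (-1 : ℤ) ^ r) ^ ((Finset.Icc 1 (n-1)) \ (Finset.univ.biUnion g)).card) := by
  set I := Finset.Icc 1 (n-1) with hI
  have step0 : (powSumDes r n : ℤ) = ∑ S ∈ I.powerset, (descStat n S : ℤ) ^ r := by
    rw [powSumDes]; push_cast; rfl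
  rw [step0]
  have step1 : ∀ S ∈ I.powerset, (descStat n S : ℤ) ^ r
      = ∑ g ∈ Fintype.piFinset (fun _ : Fin r => S.powerset),
          ∏ i : Fin r, ((-1 : ℤ) ^ (S.card - (g i).card) * (aCount n (g i) : ℤ)) := by
    intro S _
    rw [descStat_eq_alt n S]
    rw [← Finset.prod_univ_sum (fun _ : Fin r => S.powerset)
      (fun _ T => (-1 : ℤ) ^ (S.card - T.card) * (aCount n T : ℤ))]
    rw [Finset.prod_const, Finset.card_univ, Fintype.card_fin]
  rw [Finset.sum_congr rfl step1]
  rw [Finset.sum_comm' (s := I.powerset) (t := fun S => Fintype.piFinset (fun _ : Fin r => S.powerset))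
    (t' := Fintype.piFinset (fun _ : Fin r => I.powerset))
    (s' := fun g => I.powerset.filter (fun S => Finset.univ.biUnion g ⊆ S))
    (by
      intro S g
      simp only [Fintype.mem_piFinset, Finset.mem_powerset, Finset.mem_filter]
      constructor
      · rintro ⟨h1, h2⟩
        exact ⟨⟨h1, Finset.biUnion_subset.mpr (fun i _ => h2 i)⟩, fun i => (h2 i).trans h1⟩
      · rintro ⟨⟨h1, h2⟩, h3⟩
        exact ⟨h1, fun i => (Finset.subset_biUnion_of_mem g (Finset.mem_univ i)).trans h2⟩)]
  refine Finset.sum_congr rfl fun g hg => ?_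
  rw [Fintype.mem_piFinset] at hg
  set U := Finset.univ.biUnion g with hU
  have hUI : U ⊆ I := Finset.biUnion_subset.mpr (fun i _ => Finset.mem_powerset.mp (hg i))
  have inner : ∀ S ∈ I.powerset.filter (fun S => U ⊆ S),
      ∏ i : Fin r, ((-1 : ℤ) ^ (S.card - (g i).card) * (aCount n (g i) : ℤ))
      = (∏ i : Fin r, ((-1 : ℤ) ^ (g i).card * (aCount n (g i) : ℤ))) * ((-1 : ℤ) ^ r) ^ S.card := by
    intro S hS
    rw [Finset.mem_filter] at hS
    have hsub : ∀ i : Fin r, g i ⊆ S := fun i =>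
      (Finset.subset_biUnion_of_mem g (Finset.mem_univ i)).trans hS.2
    have e1 : ∀ i : Fin r, (-1 : ℤ) ^ (S.card - (g i).card) * (aCount n (g i) : ℤ)
        = (-1 : ℤ) ^ S.card * ((-1 : ℤ) ^ (g i).card * (aCount n (g i) : ℤ)) := by
      intro i
      rw [neg_one_pow_sub (Finset.card_le_card (hsub i))]
      ring
    rw [Finset.prod_congr rfl (fun i _ => e1 i), Finset.prod_mul_distrib, Finset.prod_const,
      Finset.card_univ, Fintype.card_fin, ← pow_mul, ← pow_mul, mul_comm S.card r]
    ring
  rw [Finset.sum_congr rfl inner, ← Finset.mul_sum, sum_pow_over_interval hUI]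

lemma digits_sum_pos {n : ℕ} (hn : 0 < n) : 0 < (Nat.digits 2 n).sum := by
  rcases Nat.eq_zero_or_pos (Nat.digits 2 n).sum with h | h
  · exfalso
    have hall : ∀ d ∈ Nat.digits 2 n, d = 0 := by
      intro d hd
      exact Nat.eq_zero_of_le_zero (h ▸ List.single_le_sum (fun _ _ => Nat.zero_le _) d hd)
    have hzero : ∀ l : List ℕ, (∀ d ∈ l, d = 0) → Nat.ofDigits 2 l = 0 := by
      intro l
      induction l with
      | nil => intro _; simp [Nat.ofDigits]
      | cons a l ih =>
        intro hl
        rw [Nat.ofDigits_cons, hl a List.mem_cons_self, ih (fun d hd => hl d (List.mem_cons_of_mem a hd))]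
    have := Nat.ofDigits_digits 2 n
    rw [hzero _ hall] at this
    omega
  · exact h

lemma digits_sum_two_pow (k : ℕ) : (Nat.digits 2 (2 ^ k)).sum = 1 := by
  induction k with
  | zero =>
    simp
  | succ k ih =>
    have h2 : (2:ℕ) ^ (k+1) = 2 * 2 ^ k := by ring
    rw [h2, Nat.digits_def' (b := 2) one_lt_two (by positivity), List.sum_cons,
      Nat.mul_mod_right, Nat.mul_div_cancel_left _ two_pos, ih]

lemma strictMono_of_adj {m : ℕ} {α : Type*} [Preorder α] {f : Fin m → α}
    (h : ∀ i : ℕ, ∀ hi : i + 1 < m, f ⟨i, Nat.lt_of_succ_lt hi⟩ < f ⟨i + 1, hi⟩) :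
    StrictMono f := by
  have key : ∀ d a, ∀ ha : a < m, ∀ hd : a + d + 1 < m, f ⟨a, ha⟩ < f ⟨a + d + 1, hd⟩ := by
    intro d
    induction d with
    | zero => intro a ha hd; exact h a hd
    | succ c ih =>
      intro a ha hd
      have hc1 : a + c + 1 < m := by omega
      have hc2 : (a + c + 1) + 1 < m := by omega
      have e : (⟨a + (c+1) + 1, hd⟩ : Fin m) = ⟨(a + c + 1) + 1, hc2⟩ :=
        Fin.mk_eq_mk.mpr (by omega)
      rw [e]
      exact lt_trans (ih a ha hc1) (h (a + c + 1) hc2)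
  intro a b hab
  have hv : (a : ℕ) < (b : ℕ) := hab
  have hb' : (a : ℕ) + ((b : ℕ) - (a : ℕ) - 1) + 1 < m := by have := b.isLt; omega
  have hk := key ((b : ℕ) - (a : ℕ) - 1) (a : ℕ) a.isLt hb'
  have e1 : (⟨(a : ℕ), a.isLt⟩ : Fin m) = a := rfl
  have e2 : (⟨(a : ℕ) + ((b : ℕ) - (a : ℕ) - 1) + 1, hb'⟩ : Fin m) = b :=
    Fin.ext (by show (a : ℕ) + ((b : ℕ) - (a : ℕ) - 1) + 1 = (b : ℕ); omega)
  rwa [e1, e2] at hk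

lemma card_lt_filter (n t : ℕ) (ht : t ≤ n) :
    (Finset.univ.filter fun j : Fin n => (j : ℕ) < t).card = t := by
  have h : (Finset.univ : Finset (Fin t)).card
      = (Finset.univ.filter fun j : Fin n => (j : ℕ) < t).card := by
    refine Finset.card_bij (fun b _ => (⟨(b : ℕ), lt_of_lt_of_le b.isLt ht⟩ : Fin n)) ?_ ?_ ?_
    · intro b _
      refine Finset.mem_filter.mpr ⟨Finset.mem_univ _, ?_⟩
      exact b.isLt
    · intro a _ b _ hab
      have h1 := congrArg Fin.val hab
      exact Fin.ext h1
    · intro j hj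
      exact ⟨⟨(j : ℕ), (Finset.mem_filter.mp hj).2⟩, Finset.mem_univ _, Fin.ext rfl⟩
  rw [← h, Finset.card_univ, Fintype.card_fin]

/-- The function underlying the permutation built from a `t`-set `B` of values and a
pattern `σ` for the first `t` positions (remaining values placed increasingly). -/
def buildFun (n t : ℕ) (B : Finset (Fin n)) (hB : B.card = t) (hBc : Bᶜ.card = n - t)
    (σ : Equiv.Perm (Fin t)) : Fin n → Fin n :=
  fun j => if h : (j : ℕ) < t then B.orderEmbOfFin hB (σ ⟨(j : ℕ), h⟩)
    else Bᶜ.orderEmbOfFin hBc ⟨(j : ℕ) - t, by have := j.isLt; omega⟩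

lemma buildFun_lt {n t : ℕ} {B : Finset (Fin n)} {hB : B.card = t} {hBc : Bᶜ.card = n - t}
    {σ : Equiv.Perm (Fin t)} {j : Fin n} (h : (j : ℕ) < t) :
    buildFun n t B hB hBc σ j = B.orderEmbOfFin hB (σ ⟨(j : ℕ), h⟩) := dif_pos h

lemma buildFun_ge {n t : ℕ} {B : Finset (Fin n)} {hB : B.card = t} {hBc : Bᶜ.card = n - t}
    {σ : Equiv.Perm (Fin t)} {j : Fin n} (h : ¬ (j : ℕ) < t) (hj : (j : ℕ) - t < n - t) :
    buildFun n t B hB hBc σ j = Bᶜ.orderEmbOfFin hBc ⟨(j : ℕ) - t, hj⟩ := dif_neg h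

lemma buildFun_inj (n t : ℕ) (B : Finset (Fin n)) (hB : B.card = t) (hBc : Bᶜ.card = n - t)
    (σ : Equiv.Perm (Fin t)) : Function.Injective (buildFun n t B hB hBc σ) := by
  intro j1 j2 heq
  unfold buildFun at heq
  by_cases h1 : (j1 : ℕ) < t <;> by_cases h2 : (j2 : ℕ) < t <;>
    simp only [h1, h2, dif_pos, dif_neg, not_false_iff] at heq
  · have e1 := (B.orderEmbOfFin hB).injective heq
    have e2 := σ.injective e1
    have e3 := congrArg Fin.val e2
    exact Fin.ext e3
  · exfalso
    have hmB : B.orderEmbOfFin hB (σ ⟨(j1 : ℕ), h1⟩) ∈ B := Finset.orderEmbOfFin_mem B hB _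
    have hmC : Bᶜ.orderEmbOfFin hBc ⟨(j2 : ℕ) - t, by have := j2.isLt; omega⟩ ∈ Bᶜ :=
      Finset.orderEmbOfFin_mem _ hBc _
    rw [heq] at hmB
    exact (Finset.mem_compl.mp hmC) hmB
  · exfalso
    have hmB : B.orderEmbOfFin hB (σ ⟨(j2 : ℕ), h2⟩) ∈ B := Finset.orderEmbOfFin_mem B hB _
    have hmC : Bᶜ.orderEmbOfFin hBc ⟨(j1 : ℕ) - t, by have := j1.isLt; omega⟩ ∈ Bᶜ :=
      Finset.orderEmbOfFin_mem _ hBc _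
    rw [← heq] at hmB
    exact (Finset.mem_compl.mp hmC) hmB
  · have e1 := (Bᶜ.orderEmbOfFin hBc).injective heq
    have e2 : (j1 : ℕ) - t = (j2 : ℕ) - t := congrArg Fin.val e1
    exact Fin.ext (by omega)

/-- The permutation built from `B` and `σ`. -/
noncomputable def buildPerm (n t : ℕ) (B : Finset (Fin n)) (hB : B.card = t) (hBc : Bᶜ.card = n - t)
    (σ : Equiv.Perm (Fin t)) : Equiv.Perm (Fin n) :=
  Equiv.ofBijective _ (Finite.injective_iff_bijective.mp (buildFun_inj n t B hB hBc σ))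

lemma buildPerm_apply {n t : ℕ} {B : Finset (Fin n)} {hB : B.card = t} {hBc : Bᶜ.card = n - t}
    {σ : Equiv.Perm (Fin t)} (j : Fin n) :
    buildPerm n t B hB hBc σ j = buildFun n t B hB hBc σ j := rfl

lemma fiber_card (n t : ℕ) (hpos : 0 < t) (htn : t < n) (T : Finset ℕ)
    (hTI : T ⊆ Finset.Icc 1 (n-1)) (htT : t ∈ T) (hmax : ∀ x ∈ T, x ≤ t)
    (B : Finset (Fin n)) (hB : B.card = t) :
    (Finset.univ.filter fun π : Equiv.Perm (Fin n) => descSet n π ⊆ T ∧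
        Finset.image (⇑π) (Finset.univ.filter fun j : Fin n => (j : ℕ) < t) = B).card
      = aCount t (T.erase t) := by
  have hBc : Bᶜ.card = n - t := by rw [Finset.card_compl, hB, Fintype.card_fin]
  rw [aCount]
  refine (Finset.card_bij (fun σ _ => buildPerm n t B hB hBc σ) ?_ ?_ ?_).symm
  · -- maps into the fiber
    intro σ hσ
    rw [Finset.mem_filter] at hσ
    have hσT := hσ.2
    rw [Finset.mem_filter]
    refine ⟨Finset.mem_univ _, ?_, ?_⟩
    · -- descent set contained in T
      intro i hi
      rw [descSet, Finset.mem_filter, Finset.mem_Icc] at hi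
      obtain ⟨⟨hi1, hin⟩, hdesc⟩ := hi
      have h2 : i < n := by omega
      have h1 : i - 1 < n := by omega
      have hd := hdesc h1 h2
      rw [buildPerm_apply, buildPerm_apply] at hd
      rcases lt_trichotomy i t with hit | rfl | hti
      · have hi1t : i - 1 < t := by omega
        rw [buildFun_lt (j := ⟨i, h2⟩) hit, buildFun_lt (j := ⟨i - 1, h1⟩) hi1t] at hd
        have hlt : σ ⟨i, hit⟩ < σ ⟨i - 1, hi1t⟩ := (B.orderEmbOfFin hB).lt_iff_lt.mp hd
        have hmem : i ∈ descSet t σ := (mem_descSet_iff hi1t hit hi1 (by omega)).mpr hlt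
        exact Finset.mem_of_mem_erase (hσT hmem)
      · exact htT
      · exfalso
        have hge2 : ¬ (i : ℕ) < t := by omega
        have hge1 : ¬ (i - 1 : ℕ) < t := by omega
        rw [buildFun_ge (j := ⟨i, h2⟩) hge2 (by omega),
          buildFun_ge (j := ⟨i - 1, h1⟩) hge1 (by omega)] at hd
        have hv := (Bᶜ.orderEmbOfFin hBc).lt_iff_lt.mp hd
        have hv2 : i - t < i - 1 - t := hv
        omega
    · -- image of the first t positions is B
      apply Finset.eq_of_subset_of_card_le
      · intro x hx
        obtain ⟨j, hj, rfl⟩ := Finset.mem_image.mp hx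
        have hjt : (j : ℕ) < t := (Finset.mem_filter.mp hj).2
        rw [buildPerm_apply, buildFun_lt hjt]
        exact Finset.orderEmbOfFin_mem B hB _
      · rw [Finset.card_image_of_injective _ (buildPerm n t B hB hBc σ).injective,
          card_lt_filter n t htn.le, hB]
  · -- injectivity
    intro σ1 h1 σ2 h2 heq
    apply Equiv.ext
    intro j
    have happ := DFunLike.congr_fun heq (⟨(j : ℕ), lt_trans j.isLt htn⟩ : Fin n)
    rw [buildPerm_apply, buildPerm_apply,
      buildFun_lt (σ := σ1) (j := ⟨(j : ℕ), lt_trans j.isLt htn⟩) (h := j.isLt),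
      buildFun_lt (σ := σ2) (j := ⟨(j : ℕ), lt_trans j.isLt htn⟩) (h := j.isLt)] at happ
    exact (B.orderEmbOfFin hB).injective happ
  · -- surjectivity
    intro π hπ
    rw [Finset.mem_filter] at hπ
    obtain ⟨-, hDes, hImg⟩ := hπ
    have hmem : ∀ j : Fin t, π ⟨(j : ℕ), lt_trans j.isLt htn⟩ ∈ B := by
      intro j
      rw [← hImg]
      refine Finset.mem_image_of_mem _ ?_
      rw [Finset.mem_filter]
      exact ⟨Finset.mem_univ _, j.isLt⟩
    have ginj : Function.Injective
        (fun j : Fin t => (B.orderIsoOfFin hB).symm ⟨π ⟨(j : ℕ), lt_trans j.isLt htn⟩, hmem j⟩) := by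
      intro a b hab
      have h1 := (B.orderIsoOfFin hB).symm.injective hab
      have h2 := congrArg Subtype.val h1
      have h3 := π.injective h2
      have h4 := congrArg Fin.val h3
      exact Fin.ext h4
    set σ : Equiv.Perm (Fin t) :=
      Equiv.ofBijective _ (Finite.injective_iff_bijective.mp ginj) with hσdef
    have hσapp : ∀ j : Fin t,
        (B.orderEmbOfFin hB) (σ j) = π ⟨(j : ℕ), lt_trans j.isLt htn⟩ := by
      intro j
      have h0 : σ j = (B.orderIsoOfFin hB).symm ⟨π ⟨(j : ℕ), lt_trans j.isLt htn⟩, hmem j⟩ := rfl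
      rw [h0, ← Finset.coe_orderIsoOfFin_apply,
        (B.orderIsoOfFin hB).apply_symm_apply]
    refine ⟨σ, ?_, ?_⟩
    · -- σ has descents in T.erase t
      rw [Finset.mem_filter]
      refine ⟨Finset.mem_univ _, ?_⟩
      intro i hi
      rw [descSet, Finset.mem_filter, Finset.mem_Icc] at hi
      obtain ⟨⟨hi1, hit1⟩, hdesc⟩ := hi
      have hit : i < t := by omega
      have h1t : i - 1 < t := by omega
      have hd := hdesc h1t hit
      have hmono := (B.orderEmbOfFin hB).strictMono hd
      rw [hσapp ⟨i, hit⟩, hσapp ⟨i - 1, h1t⟩] at hmono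
      have hplt : π ⟨i, by omega⟩ < π ⟨i - 1, by omega⟩ := hmono
      have hiT : i ∈ T :=
        hDes ((mem_descSet_iff (by omega) (by omega) hi1 (by omega)).mpr hplt)
      exact Finset.mem_erase.mpr ⟨by omega, hiT⟩
    · -- buildPerm σ = π
      apply Equiv.ext
      intro j
      rw [buildPerm_apply]
      by_cases hj : (j : ℕ) < t
      · rw [buildFun_lt hj, hσapp ⟨(j : ℕ), hj⟩]
      · rw [buildFun_ge hj (by have := j.isLt; omega)]
        have hfmem : ∀ m : Fin (n - t),
            (fun m : Fin (n - t) => π ⟨t + (m : ℕ), by have := m.isLt; omega⟩) m ∈ Bᶜ := by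
          intro m
          rw [Finset.mem_compl]
          intro hmem2
          have hmem2' : π ⟨t + (m : ℕ), by have := m.isLt; omega⟩
              ∈ Finset.image (⇑π) (Finset.univ.filter fun j : Fin n => (j : ℕ) < t) := by
            rw [hImg]; exact hmem2
          obtain ⟨j', hj', heq'⟩ := Finset.mem_image.mp hmem2'
          have hj't : (j' : ℕ) < t := (Finset.mem_filter.mp hj').2
          have h5 : (j' : ℕ) = t + (m : ℕ) := congrArg Fin.val (π.injective heq')
          omega
        have hfmono : StrictMono
            (fun m : Fin (n - t) => π ⟨t + (m : ℕ), by have := m.isLt; omega⟩) := by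
          apply strictMono_of_adj
          intro i hi
          have hp2 : t + i + 1 < n := by omega
          have hp1 : t + i < n := by omega
          have hnodesc : ¬ (π ⟨t + i + 1, hp2⟩ < π ⟨t + i, hp1⟩) := by
            intro hlt
            have hmemdesc : (t + i + 1) ∈ descSet n π := by
              rw [mem_descSet_iff (h1 := by omega) (h2 := hp2) (by omega) (by omega)]
              exact hlt
            have hTT := hmax _ (hDes hmemdesc)
            omega
          have hne : π ⟨t + i, hp1⟩ ≠ π ⟨t + i + 1, hp2⟩ := by
            intro heq2
            have h6 : t + i = t + i + 1 := congrArg Fin.val (π.injective heq2)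
            omega
          exact lt_of_le_of_ne (not_lt.mp hnodesc) hne
        have huniq := Finset.orderEmbOfFin_unique hBc hfmem hfmono
        have hval := congrFun huniq ⟨(j : ℕ) - t, by have := j.isLt; omega⟩
        rw [← hval]
        congr 1
        apply Fin.ext
        simp only []
        omega

lemma aCount_rec (n t : ℕ) (hpos : 0 < t) (htn : t < n) (T : Finset ℕ)
    (hTI : T ⊆ Finset.Icc 1 (n-1)) (htT : t ∈ T) (hmax : ∀ x ∈ T, x ≤ t) :
    aCount n T = n.choose t * aCount t (T.erase t) := by
  rw [aCount]
  rw [Finset.card_eq_sum_card_fiberwise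
    (f := fun π : Equiv.Perm (Fin n) => Finset.image (⇑π) (Finset.univ.filter fun j : Fin n => (j : ℕ) < t))
    (t := Finset.powersetCard t Finset.univ)
    (fun π _ => by
      simp only [Finset.mem_coe, Finset.mem_powersetCard]
      exact ⟨Finset.subset_univ _, by
        rw [Finset.card_image_of_injective _ π.injective, card_lt_filter n t htn.le]⟩)]
  have congrH : ∀ B ∈ Finset.powersetCard t Finset.univ,
      ((Finset.univ.filter fun π : Equiv.Perm (Fin n) => descSet n π ⊆ T).filter
        (fun π : Equiv.Perm (Fin n) =>
          Finset.image (⇑π) (Finset.univ.filter fun j : Fin n => (j : ℕ) < t) = B)).card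
      = aCount t (T.erase t) := by
    intro B hBmem
    rw [Finset.filter_filter]
    exact fiber_card n t hpos htn T hTI htT hmax B (Finset.mem_powersetCard.mp hBmem).2
  rw [Finset.sum_congr rfl congrH, Finset.sum_const, Finset.card_powersetCard, Finset.card_univ,
    Fintype.card_fin, smul_eq_mul]

lemma keyGen : ∀ n : ℕ, ∀ T : Finset ℕ, 0 < n → T ⊆ Finset.Icc 1 (n-1) →
    2 ^ (T.card + 1) ∣ 2 ^ ((Nat.digits 2 n).sum) * aCount n T := by
  intro n
  induction n using Nat.strong_induction_on with
  | _ n ih =>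
  intro T hn hT
  rcases T.eq_empty_or_nonempty with rfl | hne
  · simp only [Finset.card_empty, zero_add, pow_one]
    exact Dvd.dvd.mul_right (dvd_pow_self 2 (digits_sum_pos hn).ne') _
  · set t := T.max' hne with htdef
    have htT : t ∈ T := T.max'_mem hne
    have hmax : ∀ x ∈ T, x ≤ t := fun x hx => T.le_max' x hx
    have htI := hT htT
    rw [Finset.mem_Icc] at htI
    have hpos : 0 < t := htI.1
    have htn : t < n := by omega
    have hrec := aCount_rec n t hpos htn T hT htT hmax
    have hT' : T.erase t ⊆ Finset.Icc 1 (t-1) := by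
      intro x hx
      obtain ⟨hxt, hxT⟩ := Finset.mem_erase.mp hx
      have h1 := hT hxT
      rw [Finset.mem_Icc] at h1
      have h2 := hmax x hxT
      rw [Finset.mem_Icc]
      omega
    have IH := ih t htn (T.erase t) hpos hT'
    have hkummer : 2 ^ ((Nat.digits 2 t).sum + (Nat.digits 2 (n-t)).sum)
        ∣ 2 ^ ((Nat.digits 2 n).sum) * n.choose t := by
      have hval := @sub_one_mul_padicValNat_choose_eq_sub_sum_digits 2 t n ⟨Nat.prime_two⟩ htn.le
      have hdvd : 2 ^ (padicValNat 2 (n.choose t)) ∣ n.choose t := pow_padicValNat_dvd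
      have hle : (Nat.digits 2 t).sum + (Nat.digits 2 (n - t)).sum
          ≤ (Nat.digits 2 n).sum + padicValNat 2 (n.choose t) := by omega
      calc 2 ^ ((Nat.digits 2 t).sum + (Nat.digits 2 (n-t)).sum)
          ∣ 2 ^ ((Nat.digits 2 n).sum + padicValNat 2 (n.choose t)) := pow_dvd_pow 2 hle
        _ = 2 ^ ((Nat.digits 2 n).sum) * 2 ^ (padicValNat 2 (n.choose t)) := pow_add 2 _ _
        _ ∣ 2 ^ ((Nat.digits 2 n).sum) * n.choose t := mul_dvd_mul_left _ hdvd
    rw [hrec]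
    have hcard : (T.erase t).card + 1 = T.card := Finset.card_erase_add_one htT
    have step : (2 ^ ((Nat.digits 2 t).sum + (Nat.digits 2 (n-t)).sum)) * (2 ^ T.card)
        ∣ (2 ^ ((Nat.digits 2 n).sum) * n.choose t)
          * (2 ^ ((Nat.digits 2 t).sum) * aCount t (T.erase t)) := by
      refine mul_dvd_mul hkummer ?_
      rw [← hcard]
      exact IH
    have e1 : (2 ^ ((Nat.digits 2 t).sum + (Nat.digits 2 (n-t)).sum)) * (2 ^ T.card)
        = 2 ^ ((Nat.digits 2 t).sum) * 2 ^ ((Nat.digits 2 (n-t)).sum + T.card) := by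
      rw [← pow_add, ← pow_add]; ring_nf
    have e2 : (2 ^ ((Nat.digits 2 n).sum) * n.choose t)
          * (2 ^ ((Nat.digits 2 t).sum) * aCount t (T.erase t))
        = 2 ^ ((Nat.digits 2 t).sum)
          * (2 ^ ((Nat.digits 2 n).sum) * (n.choose t * aCount t (T.erase t))) := by ring
    rw [e1, e2] at step
    have step2 := (Nat.mul_dvd_mul_iff_left (pow_pos two_pos ((Nat.digits 2 t).sum))).mp step
    have hsnt : 0 < (Nat.digits 2 (n-t)).sum := digits_sum_pos (by omega)
    exact dvd_trans (pow_dvd_pow 2 (by omega)) step2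

lemma keyDvd {k n : ℕ} (hn : n = 2 ^ k) {T : Finset ℕ} (hT : T ⊆ Finset.Icc 1 (n - 1)) :
    2 ^ T.card ∣ aCount n T := by
  have h := keyGen n T (by rw [hn]; positivity) hT
  rw [hn, digits_sum_two_pow k, pow_one, ← hn] at h
  rw [pow_succ, mul_comm] at h
  exact (Nat.mul_dvd_mul_iff_left two_pos).mp h

theorem stmt12 (k r n : ℕ) (hn : n = 2 ^ k) (hr : 0 < r) :
    2 ^ (n - 1) ∣ powSumDes r n := by
  have hn1 : 1 ≤ n := by rw [hn]; exact Nat.one_le_two_pow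
  set I := Finset.Icc 1 (n-1) with hI
  have hIcard : I.card = n - 1 := by rw [hI, Nat.card_Icc]; omega
  suffices h : (2 : ℤ) ^ (n - 1) ∣ (powSumDes r n : ℤ) by
    have h2 : ((2 ^ (n-1) : ℕ) : ℤ) ∣ ((powSumDes r n : ℕ) : ℤ) := by push_cast; exact h
    exact_mod_cast h2
  rw [powSum_eq r n]
  apply Finset.dvd_sum
  intro g hg
  rw [Fintype.mem_piFinset] at hg
  set U := Finset.univ.biUnion g with hU
  have hUI : U ⊆ I := Finset.biUnion_subset.mpr (fun i _ => Finset.mem_powerset.mp (hg i))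
  have hprod : (2 : ℤ) ^ U.card ∣ ∏ i : Fin r, ((-1 : ℤ) ^ (g i).card * (aCount n (g i) : ℤ)) := by
    have each : ∀ i : Fin r, ((2 : ℤ) ^ (g i).card)
        ∣ ((-1 : ℤ) ^ (g i).card * (aCount n (g i) : ℤ)) := by
      intro i
      have hnat : (2 : ℕ) ^ (g i).card ∣ aCount n (g i) :=
        keyDvd hn (Finset.mem_powerset.mp (hg i))
      have h0 := Int.natCast_dvd_natCast.mpr hnat
      push_cast at h0
      exact h0.mul_left _
    have h1 : ∏ i : Fin r, (2 : ℤ) ^ (g i).card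
        ∣ ∏ i : Fin r, ((-1 : ℤ) ^ (g i).card * (aCount n (g i) : ℤ)) :=
      Finset.prod_dvd_prod_of_dvd _ _ (fun i _ => each i)
    have h2 : ∏ i : Fin r, (2 : ℤ) ^ (g i).card = (2 : ℤ) ^ (∑ i : Fin r, (g i).card) :=
      Finset.prod_pow_eq_pow_sum _ _ _
    have h3 : U.card ≤ ∑ i : Fin r, (g i).card := Finset.card_biUnion_le
    exact dvd_trans (pow_dvd_pow 2 h3) (h2 ▸ h1)
  have hcards : U.card + (I \ U).card = n - 1 := by
    rw [Finset.card_sdiff_of_subset hUI, hIcard]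
    have := Finset.card_le_card hUI
    rw [hIcard] at this
    omega
  rcases Nat.even_or_odd r with he | ho
  · rw [he.neg_one_pow, one_pow, show (1 : ℤ) + 1 = 2 by norm_num]
    have e : (2 : ℤ) ^ (n - 1) = 2 ^ U.card * 2 ^ (I \ U).card := by
      rw [← pow_add, hcards]
    rw [e, one_mul]
    exact mul_dvd_mul hprod dvd_rfl
  · rw [ho.neg_one_pow]
    rw [show (1 : ℤ) + -1 = 0 by ring]
    by_cases hc : (I \ U).card = 0
    · rw [hc, pow_zero, mul_one]
      have hUcard : U.card = n - 1 := by omega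
      exact (hUcard ▸ hprod).mul_right _
    · rw [zero_pow hc, mul_zero, mul_zero]
      exact dvd_zero _
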